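/- Let Λ be a finite measure on [0,1] with ∫_{[0,1]} x^{-1} Λ(dx) < ∞, and let g_{n,k} = C(n, k-1) ∫_{[0,1]} x^{n-k-1}(1-x)^{k-1} Λ(dx). Then for every λ ≥ 0, Σ_{k=1}^{n-1} g_{n,k} (1 - (k/n)^λ) → ∫_{[0,1]} (1 - (1-x)^λ) x^{-2} Λ(dx) as n → ∞. -/

import Mathlib

open MeasureTheory Filter Real
open scoped ENNReal NNReal unitInterval Topology


lemma auxL1' {lam t : ℝ} (hlam : 1 ≤ lam) (ht0 : 0 ≤ t) :
    1 - t ^ lam ≤ lam * (1 - t) := by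
  have h := one_add_mul_self_le_rpow_one_add (s := t - 1) (by linarith) hlam
  have e : 1 + (t - 1) = t := by ring
  rw [e] at h
  nlinarith [h]

lemma auxL1 {lam t : ℝ} (hlam : 0 ≤ lam) (ht0 : 0 ≤ t) (ht1 : t ≤ 1) :
    1 - t ^ lam ≤ max 1 lam * (1 - t) := by
  rcases le_total 1 lam with h | h
  · exact le_trans (auxL1' h ht0) (by nlinarith [le_max_right (1:ℝ) lam])
  · rcases eq_or_lt_of_le ht0 with rfl | htpos
    · have : (0:ℝ) ^ lam = 0 ∨ (0:ℝ) ^ lam = 1 := by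
        rcases eq_or_lt_of_le hlam with rfl | hl
        · right; simp
        · left; exact Real.zero_rpow hl.ne'
      rcases this with h0 | h0 <;> rw [h0] <;> nlinarith [le_max_left (1:ℝ) lam]
    · have : t ^ (1:ℝ) ≤ t ^ lam :=
        Real.rpow_le_rpow_of_exponent_ge htpos ht1 h
      rw [Real.rpow_one] at this
      nlinarith [le_max_left (1:ℝ) lam]

lemma aux_subadd {p a b : ℝ} (hp0 : 0 ≤ p) (hp1 : p ≤ 1) (ha : 0 ≤ a) (hb : 0 ≤ b) :
    (a + b) ^ p ≤ a ^ p + b ^ p := by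
  have h := NNReal.rpow_add_le_add_rpow a.toNNReal b.toNNReal hp0 hp1
  have h2 : (((a.toNNReal + b.toNNReal : ℝ≥0) : ℝ)) ^ p ≤
      ((a.toNNReal : ℝ)) ^ p + ((b.toNNReal : ℝ)) ^ p := by
    rw [← NNReal.coe_rpow, ← NNReal.coe_rpow, ← NNReal.coe_rpow]
    exact_mod_cast h
  rw [NNReal.coe_add, Real.coe_toNNReal _ ha, Real.coe_toNNReal _ hb] at h2
  exact h2

lemma auxL2 {lam a b : ℝ} (hlam : 0 < lam) (ha : 0 ≤ a) (hab : a ≤ b) (hb : b ≤ 1) :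
    b ^ lam - a ^ lam ≤ max (lam * (b - a)) ((b - a) ^ lam) := by
  rcases le_total lam 1 with h | h
  · have hs : b ^ lam ≤ (b - a) ^ lam + a ^ lam := by
      have := aux_subadd hlam.le h (by linarith : (0:ℝ) ≤ b - a) ha
      simpa [sub_add_cancel] using this
    have := le_max_right (lam * (b - a)) ((b - a) ^ lam)
    linarith
  · rcases eq_or_lt_of_le (le_trans ha hab) with hb0 | hbpos
    · have ha0 : a = 0 := le_antisymm (hb0 ▸ hab) ha
      simp [ha0, ← hb0]
    · have ht0 : 0 ≤ a / b := div_nonneg ha hbpos.le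
      have h1 : 1 - (a / b) ^ lam ≤ lam * (1 - a / b) := auxL1' h ht0
      have hdiv : (a / b) ^ lam = a ^ lam / b ^ lam := Real.div_rpow ha hbpos.le lam
      have hbl : 0 < b ^ lam := Real.rpow_pos_of_pos hbpos _
      have hble : b ^ lam ≤ b := by
        have := Real.rpow_le_rpow_of_exponent_ge hbpos hb h
        rwa [Real.rpow_one] at this
      have key : b ^ lam - a ^ lam ≤ lam * (b - a) := by
        have h2 : b ^ lam * (1 - (a/b)^lam) ≤ b ^ lam * (lam * (1 - a/b)) :=
          mul_le_mul_of_nonneg_left h1 hbl.le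
        rw [hdiv] at h2
        have e1 : b ^ lam * (1 - a ^ lam / b ^ lam) = b ^ lam - a ^ lam := by
          field_simp
        have e2 : b ^ lam * (lam * (1 - a/b)) = lam * (b - a) * (b ^ lam / b) := by
          field_simp
        rw [e1, e2] at h2
        have e3 : b ^ lam / b ≤ 1 := by
          rw [div_le_one hbpos]; exact hble
        have h4 : lam * (b - a) * (b ^ lam / b) ≤ lam * (b - a) * 1 := by
          apply mul_le_mul_of_nonneg_left e3
          have : 0 ≤ b - a := by linarith
          positivity
        linarith
      exact le_trans key (le_max_left _ _)


lemma aux_choose {n j : ℕ} (hj : j < n) :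
    (n - j) * n.choose j = n * (n-1).choose j := by
  have h1 := Nat.choose_succ_right_eq n j
  have h2 := Nat.add_one_mul_choose_eq (n-1) j
  rw [Nat.sub_add_cancel (by omega : 1 ≤ n)] at h2
  rw [mul_comm, h2]
  exact h1.symm

lemma aux_binom (m : ℕ) (x : ℝ) :
    ∑ j ∈ Finset.range (m+1), (m.choose j : ℝ) * x ^ (m - j) * (1-x) ^ j = 1 := by
  have h := add_pow (1 - x) x m
  rw [sub_add_cancel, one_pow] at h
  have e : ∑ j ∈ Finset.range (m+1), (m.choose j : ℝ) * x ^ (m - j) * (1-x) ^ j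
      = ∑ j ∈ Finset.range (m+1), (1-x) ^ j * x ^ (m - j) * (m.choose j : ℝ) :=
    Finset.sum_congr rfl fun j _ => by ring
  rw [e, ← h]


noncomputable def Fn (lam : ℝ) (n : ℕ) (x : ℝ) : ℝ :=
  ∑ j ∈ Finset.range (n-1),
    (n.choose j : ℝ) * (x ^ (n-j-2) * (1-x) ^ j) * (1 - (((j:ℝ)+1)/n) ^ lam)

lemma t_mem {n j : ℕ} (hj : j < n - 1) :
    0 ≤ ((j:ℝ)+1)/n ∧ ((j:ℝ)+1)/n ≤ 1 := by
  have hn2 : 2 ≤ n := by omega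
  have hn : 0 < (n:ℝ) := by positivity
  constructor
  · positivity
  · rw [div_le_one hn]
    have : (j:ℝ) + 1 ≤ (n:ℝ) := by
      have h2 : j + 1 ≤ n := by omega
      exact_mod_cast h2
    linarith

lemma c_mem {lam : ℝ} (hlam : 0 ≤ lam) {n j : ℕ} (hj : j < n - 1) :
    0 ≤ 1 - (((j:ℝ)+1)/n) ^ lam := by
  obtain ⟨h0, h1⟩ := t_mem hj
  linarith [Real.rpow_le_one h0 h1 hlam]

lemma Fn_nonneg {lam : ℝ} (hlam : 0 ≤ lam) (n : ℕ) {x : ℝ} (hx0 : 0 ≤ x) (hx1 : x ≤ 1) :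
    0 ≤ Fn lam n x := by
  apply Finset.sum_nonneg
  intro j hj
  rw [Finset.mem_range] at hj
  have hc := c_mem hlam hj
  have : (0:ℝ) ≤ 1 - x := by linarith
  positivity

lemma Fn_sq_le {lam : ℝ} (hlam : 0 ≤ lam) (n : ℕ) {x : ℝ} (hx0 : 0 ≤ x) (hx1 : x ≤ 1) :
    x^2 * Fn lam n x ≤ max 1 lam * x := by
  rw [Fn, Finset.mul_sum]
  have hM : (0:ℝ) ≤ max 1 lam := le_trans zero_le_one (le_max_left _ _)
  have h1x : (0:ℝ) ≤ 1 - x := by linarith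
  calc ∑ j ∈ Finset.range (n-1),
        x^2 * ((n.choose j : ℝ) * (x ^ (n-j-2) * (1-x) ^ j) * (1 - (((j:ℝ)+1)/n) ^ lam))
      ≤ ∑ j ∈ Finset.range (n-1),
        max 1 lam * x * (((n-1).choose j : ℝ) * x ^ ((n-1) - j) * (1-x) ^ j) := by
        apply Finset.sum_le_sum
        intro j hj
        rw [Finset.mem_range] at hj
        have hn2 : 2 ≤ n := by omega
        have hn : (0:ℝ) < n := by positivity
        obtain ⟨ht0, ht1⟩ := t_mem hj
        set t : ℝ := ((j:ℝ)+1)/n with ht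
        set M : ℝ := max 1 lam with hMdef
        set C : ℝ := (n.choose j : ℝ) with hC
        set C' : ℝ := ((n-1).choose j : ℝ) with hC'
        have hCnn : 0 ≤ C := by positivity
        have hcle : 1 - t ^ lam ≤ M * (1 - t) := auxL1 hlam ht0 ht1
        have hid : ((n:ℝ) - j) * C = (n:ℝ) * C' := by
          have h := aux_choose (show j < n by omega)
          have h2 : (((n - j) * n.choose j : ℕ) : ℝ) = ((n * (n-1).choose j : ℕ) : ℝ) := by
            exact_mod_cast h
          push_cast [Nat.cast_sub (by omega : j ≤ n)] at h2
          rw [hC, hC']; linarith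
        have hkey : C * (1 - t) ≤ C' := by
          have e : 1 - t = ((n:ℝ) - j - 1)/n := by
            rw [ht]; field_simp; ring
          rw [e, ← mul_div_assoc, div_le_iff₀ hn]
          nlinarith [hid, hCnn]
        have e2 : x^2 * x^(n-j-2) = x^(n-j) := by
          rw [← pow_add]; congr 1; omega
        have e1 : x^(n-j) = x * x^((n-1)-j) := by
          rw [← pow_succ']; congr 1; omega
        calc x^2 * (C * (x ^ (n-j-2) * (1-x) ^ j) * (1 - t ^ lam))
            = x^(n-j) * (1-x)^j * (C * (1 - t ^ lam)) := by rw [← e2]; ring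
          _ ≤ x^(n-j) * (1-x)^j * (C * (M * (1 - t))) := by
              apply mul_le_mul_of_nonneg_left _ (by positivity)
              exact mul_le_mul_of_nonneg_left hcle hCnn
          _ = M * (x^(n-j) * (1-x)^j) * (C * (1 - t)) := by ring
          _ ≤ M * (x^(n-j) * (1-x)^j) * C' := by
              apply mul_le_mul_of_nonneg_left hkey (by positivity)
          _ = M * x * (C' * x^((n-1)-j) * (1-x)^j) := by rw [e1]; ring
    _ = max 1 lam * x * ∑ j ∈ Finset.range (n-1),
          (((n-1).choose j : ℝ) * x ^ ((n-1) - j) * (1-x) ^ j) := by rw [Finset.mul_sum]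
    _ ≤ max 1 lam * x * ∑ j ∈ Finset.range ((n-1)+1),
          (((n-1).choose j : ℝ) * x ^ ((n-1) - j) * (1-x) ^ j) := by
        apply mul_le_mul_of_nonneg_left _ (by positivity)
        apply Finset.sum_le_sum_of_subset_of_nonneg
        · exact Finset.range_subset_range.2 (by omega)
        · intro j _ _; positivity
    _ = max 1 lam * x := by rw [aux_binom (n-1) x, mul_one]

lemma Fn_le {lam : ℝ} (hlam : 0 ≤ lam) (n : ℕ) {x : ℝ} (hx0 : 0 < x) (hx1 : x ≤ 1) :
    Fn lam n x ≤ max 1 lam * x⁻¹ := by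
  have h := Fn_sq_le hlam n hx0.le hx1
  have hx2 : (0:ℝ) < x^2 := by positivity
  rw [show Fn lam n x = (x^2 * Fn lam n x) / x^2 by field_simp]
  rw [div_le_iff₀ hx2]
  calc x^2 * Fn lam n x ≤ max 1 lam * x := h
    _ = max 1 lam * x⁻¹ * x^2 := by field_simp



lemma term_lo {lam x : ℝ} (hlam : 0 < lam) (hx0 : 0 ≤ x) (hx1 : x ≤ 1)
    {n k : ℕ} (hn : 2 ≤ n) (hk : k ≤ n) :
    0 ≤ ((n.choose k:ℝ) * x^(n-k) * (1-x)^k) * (1 - ((k:ℝ)/n)^lam)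
      - (if k < n-1 then ((n.choose k:ℝ) * x^(n-k) * (1-x)^k) * (1 - (((k:ℝ)+1)/n)^lam) else 0) := by
  have hnR : (0:ℝ) < n := by positivity
  have h1x : (0:ℝ) ≤ 1 - x := by linarith
  have hβ : (0:ℝ) ≤ (n.choose k:ℝ) * x^(n-k) * (1-x)^k := by positivity
  by_cases h : k < n-1
  · rw [if_pos h]
    have hmono : ((k:ℝ)/n)^lam ≤ (((k:ℝ)+1)/n)^lam := by
      apply Real.rpow_le_rpow (by positivity) _ hlam.le
      gcongr
      linarith
    nlinarith [hβ, hmono]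
  · rw [if_neg h, sub_zero]
    apply mul_nonneg hβ
    have ht1 : (k:ℝ)/n ≤ 1 := by
      rw [div_le_one hnR]; exact_mod_cast hk
    linarith [Real.rpow_le_one (by positivity : (0:ℝ) ≤ (k:ℝ)/n) ht1 hlam.le]

lemma term_up {lam x : ℝ} (hlam : 0 < lam) (hx0 : 0 ≤ x) (hx1 : x ≤ 1)
    {n k : ℕ} (hn : 2 ≤ n) (hk : k ≤ n) :
    ((n.choose k:ℝ) * x^(n-k) * (1-x)^k) * (1 - ((k:ℝ)/n)^lam)
      - (if k < n-1 then ((n.choose k:ℝ) * x^(n-k) * (1-x)^k) * (1 - (((k:ℝ)+1)/n)^lam) else 0)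
    ≤ ((n.choose k:ℝ) * x^(n-k) * (1-x)^k) * max (lam * (1/n)) ((1/n)^lam)
      + (if k = n-1 then max 1 lam * (1-x)^(n-1) else 0) := by
  have hnR : (0:ℝ) < n := by positivity
  have h1x : (0:ℝ) ≤ 1 - x := by linarith
  have hβ : (0:ℝ) ≤ (n.choose k:ℝ) * x^(n-k) * (1-x)^k := by positivity
  have hM : (0:ℝ) ≤ max 1 lam := le_trans zero_le_one (le_max_left _ _)
  have hite : (0:ℝ) ≤ (if k = n-1 then max 1 lam * (1-x)^(n-1) else 0) := by
    split <;> positivity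
  by_cases h : k < n-1
  · rw [if_pos h, if_neg (by omega : ¬ k = n-1)]
    have key : (((k:ℝ)+1)/n)^lam - ((k:ℝ)/n)^lam ≤ max (lam * (1/n)) ((1/n)^lam) := by
      have hb1 : ((k:ℝ)+1)/n ≤ 1 := by
        rw [div_le_one hnR]
        have : (k:ℝ) + 1 ≤ (n:ℝ) := by exact_mod_cast (by omega : k + 1 ≤ n)
        linarith
      have heq : ((k:ℝ)+1)/n = (k:ℝ)/n + 1/n := by ring
      have h2 := auxL2 hlam (by positivity : (0:ℝ) ≤ (k:ℝ)/n)
        (by rw [heq]; linarith [one_div_pos.2 hnR] : (k:ℝ)/n ≤ ((k:ℝ)+1)/n) hb1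
      have heq2 : ((k:ℝ)+1)/n - (k:ℝ)/n = 1/n := by ring
      rwa [heq2] at h2
    have expand : ((n.choose k:ℝ) * x^(n-k) * (1-x)^k) * (1 - ((k:ℝ)/n)^lam)
        - ((n.choose k:ℝ) * x^(n-k) * (1-x)^k) * (1 - (((k:ℝ)+1)/n)^lam)
        = ((n.choose k:ℝ) * x^(n-k) * (1-x)^k) * ((((k:ℝ)+1)/n)^lam - ((k:ℝ)/n)^lam) := by
      ring
    rw [expand, add_zero]
    exact mul_le_mul_of_nonneg_left key hβ
  · rw [if_neg h, sub_zero]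
    rcases (by omega : k = n - 1 ∨ k = n) with hk1 | hk2
    · rw [if_pos hk1]
      subst hk1
      have hc1 : ((n-1:ℕ):ℝ) = (n:ℝ) - 1 := by
        push_cast [Nat.cast_sub (by omega : 1 ≤ n)]; ring
      have ht0 : (0:ℝ) ≤ ((n-1:ℕ):ℝ)/n := by positivity
      have ht1 : ((n-1:ℕ):ℝ)/n ≤ 1 := by
        rw [div_le_one hnR, hc1]; linarith
      have hL1 := auxL1 hlam.le ht0 ht1
      have h1t : 1 - ((n-1:ℕ):ℝ)/n = 1/n := by
        rw [hc1]; field_simp; ring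
      rw [h1t] at hL1
      have hch : (n.choose (n-1) : ℝ) = (n:ℝ) := by
        have : n.choose (n-1) = n := by
          rw [show n = (n-1)+1 by omega]
          simp [Nat.choose_succ_self_right]
        rw [this]
      have hxp : x^(n-(n-1)) = x := by
        rw [show n-(n-1) = 1 by omega, pow_one]
      calc ((n.choose (n-1):ℝ) * x^(n-(n-1)) * (1-x)^(n-1)) * (1 - ((((n-1:ℕ)):ℝ)/n)^lam)
          ≤ ((n.choose (n-1):ℝ) * x^(n-(n-1)) * (1-x)^(n-1)) * (max 1 lam * (1/n)) := by
            apply mul_le_mul_of_nonneg_left hL1 hβ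
        _ = max 1 lam * x * (1-x)^(n-1) * ((n.choose (n-1):ℝ) / n) := by
            rw [hxp]; ring
        _ = max 1 lam * x * (1-x)^(n-1) := by
            rw [hch]; field_simp
        _ ≤ max 1 lam * (1-x)^(n-1) := by
            nlinarith [mul_nonneg hM (pow_nonneg h1x (n-1)), hx1]
        _ ≤ ((n.choose (n-1):ℝ) * x^(n-(n-1)) * (1-x)^(n-1)) * max (lam * (1/n)) ((1/n)^lam)
              + max 1 lam * (1-x)^(n-1) := by
            have : (0:ℝ) ≤ ((n.choose (n-1):ℝ) * x^(n-(n-1)) * (1-x)^(n-1)) * max (lam * (1/n)) ((1/n)^lam) := by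
              have h0 : (0:ℝ) ≤ max (lam * (1/n)) ((1/n)^lam) := by
                apply le_trans _ (le_max_left _ _); positivity
              exact mul_nonneg hβ h0
            linarith
    · subst hk2
      rw [if_neg (by omega : ¬ k = k-1)]
      have he : ((k:ℝ)/k)^lam = 1 := by
        rw [div_self hnR.ne', Real.one_rpow]
      rw [he, sub_self, mul_zero, add_zero]
      have h0 : (0:ℝ) ≤ max (lam * (1/(k:ℝ))) ((1/(k:ℝ))^lam) := by
        apply le_trans _ (le_max_left _ _); positivity
      exact mul_nonneg hβ h0



lemma pointwise {lam : ℝ} (hlam : 0 < lam) {x : ℝ} (hx0 : 0 < x) (hx1 : x ≤ 1) :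
    Tendsto (fun n => Fn lam n x) atTop (𝓝 ((1 - (1-x)^lam)/x^2)) := by
  have h1x0 : (0:ℝ) ≤ 1 - x := by linarith
  have hpI : (1 - x) ∈ I := ⟨h1x0, by linarith⟩
  have hcont : Continuous fun t : I => 1 - (t:ℝ) ^ lam := by
    apply continuous_const.sub
    exact (continuous_iff_continuousAt.2 fun y =>
      Real.continuousAt_rpow_const y lam (Or.inr hlam.le)).comp continuous_subtype_val
  set f : C(I, ℝ) := ⟨fun t => 1 - (t:ℝ) ^ lam, hcont⟩ with hf
  set pt : I := ⟨1 - x, hpI⟩ with hpt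
  set B : ℕ → ℝ := fun n => bernsteinApproximation n f pt with hB
  set S : ℕ → ℝ := fun n => x^2 * Fn lam n x with hS
  have hBtend : Tendsto B atTop (𝓝 (1 - (1-x) ^ lam)) := by
    have h1 : Tendsto (fun n => bernsteinApproximation n f) atTop (𝓝 f) :=
      bernsteinApproximation_uniform f
    have h2 : Continuous fun g : C(I,ℝ) => g pt := continuous_eval_const pt
    have h3 := (h2.tendsto f).comp h1
    have : f pt = 1 - (1-x) ^ lam := rfl
    rw [← this]
    exact h3
  have hBeq : ∀ n : ℕ, B n = ∑ k ∈ Finset.range (n+1),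
      ((n.choose k : ℝ) * x^(n-k) * (1-x)^k) * (1 - ((k:ℝ)/(n:ℝ)) ^ lam) := by
    intro n
    show (bernsteinApproximation n f) pt = _
    rw [bernsteinApproximation, ContinuousMap.sum_apply]
    rw [← Fin.sum_univ_eq_sum_range (fun k =>
      ((n.choose k : ℝ) * x^(n-k) * (1-x)^k) * (1 - ((k:ℝ)/(n:ℝ)) ^ lam)) (n+1)]
    apply Finset.sum_congr rfl
    intro k _
    change (bernstein n k pt) • f (bernstein.z k) = _
    rw [bernstein_apply]
    have hz : ((bernstein.z k : I) : ℝ) = ((k:ℕ):ℝ)/(n:ℝ) := rfl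
    have hfz : f (bernstein.z k) = 1 - (((k:ℕ):ℝ)/(n:ℝ)) ^ lam := by
      rw [hf]; simp only [ContinuousMap.coe_mk]; rw [hz]
    rw [hfz]
    have hptc : ((pt : I) : ℝ) = 1 - x := rfl
    rw [hptc]
    have : (1:ℝ) - (1 - x) = x := by ring
    rw [this]
    simp only [smul_eq_mul]
    ring
  have hSeq : ∀ n : ℕ, S n = ∑ k ∈ Finset.range (n+1),
      (if k < n-1 then ((n.choose k : ℝ) * x^(n-k) * (1-x)^k) * (1 - (((k:ℝ)+1)/(n:ℝ)) ^ lam)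
       else 0) := by
    intro n
    simp only [hS, Fn]
    rw [Finset.mul_sum]
    rw [← Finset.sum_subset (Finset.range_subset_range.2 (by omega : n-1 ≤ n+1))
      (fun k _ hk => if_neg (by rw [Finset.mem_range] at hk; omega))]
    apply Finset.sum_congr rfl
    intro j hj
    rw [Finset.mem_range] at hj
    rw [if_pos hj]
    have e2 : x^2 * x^(n-j-2) = x^(n-j) := by rw [← pow_add]; congr 1; omega
    rw [← e2]; ring
  set M : ℝ := max 1 lam with hM
  set eps : ℕ → ℝ := fun n => max (lam * (1/(n:ℝ))) ((1/(n:ℝ))^lam) + M * (1-x)^(n-1)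
    with heps
  have hepsT : Tendsto eps atTop (𝓝 0) := by
    have t1 : Tendsto (fun n : ℕ => lam * (1/(n:ℝ))) atTop (𝓝 0) := by
      have := tendsto_one_div_atTop_nhds_zero_nat.const_mul lam
      simpa using this
    have t2 : Tendsto (fun n : ℕ => (1/(n:ℝ))^lam) atTop (𝓝 0) := by
      have hc : ContinuousAt (fun y : ℝ => y ^ lam) 0 :=
        Real.continuousAt_rpow_const 0 lam (Or.inr hlam.le)
      have := hc.tendsto.comp tendsto_one_div_atTop_nhds_zero_nat
      simpa [Real.zero_rpow hlam.ne', Function.comp_def] using this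
    have t3 : Tendsto (fun n : ℕ => max (lam * (1/(n:ℝ))) ((1/(n:ℝ))^lam)) atTop (𝓝 0) := by
      have := t1.max t2
      simpa using this
    have t4 : Tendsto (fun n : ℕ => M * (1-x)^(n-1)) atTop (𝓝 0) := by
      have hpow : Tendsto (fun m : ℕ => (1-x)^m) atTop (𝓝 0) :=
        tendsto_pow_atTop_nhds_zero_of_lt_one h1x0 (by linarith)
      have := (hpow.comp (tendsto_sub_atTop_nat 1)).const_mul M
      simpa [Function.comp] using this
    simpa [heps] using t3.add t4
  have hDlo : ∀ᶠ n in atTop, 0 ≤ B n - S n := by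
    filter_upwards [eventually_ge_atTop 2] with n hn
    rw [hBeq n, hSeq n, ← Finset.sum_sub_distrib]
    apply Finset.sum_nonneg
    intro k hk
    rw [Finset.mem_range] at hk
    exact term_lo hlam hx0.le hx1 hn (by omega)
  have hDhi : ∀ᶠ n in atTop, B n - S n ≤ eps n := by
    filter_upwards [eventually_ge_atTop 2] with n hn
    rw [hBeq n, hSeq n, ← Finset.sum_sub_distrib]
    calc ∑ k ∈ Finset.range (n+1),
          (((n.choose k : ℝ) * x^(n-k) * (1-x)^k) * (1 - ((k:ℝ)/(n:ℝ)) ^ lam)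
           - (if k < n-1 then ((n.choose k : ℝ) * x^(n-k) * (1-x)^k) * (1 - (((k:ℝ)+1)/(n:ℝ)) ^ lam)
              else 0))
        ≤ ∑ k ∈ Finset.range (n+1),
          (((n.choose k : ℝ) * x^(n-k) * (1-x)^k) * max (lam * (1/(n:ℝ))) ((1/(n:ℝ))^lam)
            + (if k = n-1 then M * (1-x)^(n-1) else 0)) := by
          apply Finset.sum_le_sum
          intro k hk
          rw [Finset.mem_range] at hk
          exact term_up hlam hx0.le hx1 hn (by omega)
      _ = (∑ k ∈ Finset.range (n+1),
            ((n.choose k : ℝ) * x^(n-k) * (1-x)^k)) * max (lam * (1/(n:ℝ))) ((1/(n:ℝ))^lam)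
            + (∑ k ∈ Finset.range (n+1), if k = n-1 then M * (1-x)^(n-1) else 0) := by
          rw [Finset.sum_add_distrib, Finset.sum_mul]
      _ = eps n := by
          rw [aux_binom n x, one_mul, Finset.sum_ite_eq' (Finset.range (n+1)) (n-1)
            (fun _ => M * (1-x)^(n-1)), if_pos (Finset.mem_range.2 (by omega))]
  have hDtend : Tendsto (fun n => B n - S n) atTop (𝓝 0) :=
    tendsto_of_tendsto_of_tendsto_of_le_of_le' tendsto_const_nhds hepsT hDlo hDhi
  have hStend : Tendsto S atTop (𝓝 (1 - (1-x) ^ lam)) := by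
    have := hBtend.sub hDtend
    rw [sub_zero] at this
    apply this.congr
    intro n; ring
  have hfin := hStend.div_const (x^2)
  apply hfin.congr
  intro n
  rw [hS]
  field_simp




lemma Fn_continuous (lam : ℝ) (n : ℕ) : Continuous (Fn lam n) := by
  apply continuous_finset_sum
  intro j _
  exact (continuous_const.mul ((continuous_pow _).mul
    ((continuous_const.sub continuous_id).pow _))).mul continuous_const

lemma step1 (Λ : Measure ℝ) [IsFiniteMeasure Λ] (lam : ℝ) (n : ℕ) :
    ∑ k ∈ Finset.Icc 1 (n-1), (n.choose (k-1) : ℝ) *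
        (∫ x in Set.Icc (0:ℝ) 1, x ^ (n - k - 1) * (1 - x) ^ (k - 1) ∂Λ) *
        (1 - ((k : ℝ) / n) ^ lam)
      = ∫ x in Set.Icc (0:ℝ) 1, Fn lam n x ∂Λ := by
  have hInt : ∀ j : ℕ, Integrable (fun x : ℝ =>
      (n.choose j : ℝ) * (x ^ (n-j-2) * (1-x) ^ j) * (1 - (((j:ℝ)+1)/n) ^ lam))
      (Λ.restrict (Set.Icc 0 1)) := by
    intro j
    apply Continuous.integrableOn_Icc
    exact (continuous_const.mul ((continuous_pow _).mul
      ((continuous_const.sub continuous_id).pow _))).mul continuous_const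
  simp only [Fn]
  rw [MeasureTheory.integral_finset_sum _ (fun j _ => hInt j)]
  rw [← Finset.Ico_add_one_right_eq_Icc, Finset.sum_Ico_eq_sum_range,
    show n - 1 + 1 - 1 = n - 1 by omega]
  apply Finset.sum_congr rfl
  intro j hj
  rw [Finset.mem_range] at hj
  simp only [show 1 + j - 1 = j by omega, show n - (1+j) - 1 = n - j - 2 by omega,
    show ((1+j:ℕ):ℝ) = (j:ℝ)+1 by push_cast; ring]
  rw [MeasureTheory.integral_mul_const, MeasureTheory.integral_const_mul]

theorem stmt17 (Λ : Measure ℝ) [IsFiniteMeasure Λ]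
    (hsupp : Λ (Set.Icc (0:ℝ) 1)ᶜ = 0)
    (hint : ∫⁻ x in Set.Icc (0:ℝ) 1, (ENNReal.ofReal x)⁻¹ ∂Λ ≠ ⊤)
    (lam : ℝ) (hlam : 0 ≤ lam) :
    Tendsto (fun n : ℕ =>
        ∑ k ∈ Finset.Icc 1 (n-1), (n.choose (k-1) : ℝ) *
          (∫ x in Set.Icc (0:ℝ) 1, x ^ (n - k - 1) * (1 - x) ^ (k - 1) ∂Λ) *
          (1 - ((k : ℝ) / n) ^ lam))
      atTop
      (nhds (∫ x in Set.Icc (0:ℝ) 1, (1 - (1 - x) ^ lam) / x ^ 2 ∂Λ)) := by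
  rcases eq_or_lt_of_le hlam with rfl | hpos
  · simp only [Real.rpow_zero, sub_self, mul_zero, Finset.sum_const_zero, zero_div,
      integral_zero]
    exact tendsto_const_nhds
  -- lam > 0
  set μ := Λ.restrict (Set.Icc (0:ℝ) 1) with hμ
  have hzero : Λ {(0:ℝ)} = 0 := by
    by_contra h
    have h1 : ∫⁻ x in {(0:ℝ)}, (ENNReal.ofReal x)⁻¹ ∂Λ
        ≤ ∫⁻ x in Set.Icc (0:ℝ) 1, (ENNReal.ofReal x)⁻¹ ∂Λ := by
      apply lintegral_mono_set
      intro y hy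
      rw [Set.mem_singleton_iff] at hy
      subst hy
      exact ⟨le_refl 0, zero_le_one⟩
    rw [lintegral_singleton] at h1
    rw [ENNReal.ofReal_zero, ENNReal.inv_zero, ENNReal.top_mul h] at h1
    exact hint (top_le_iff.1 h1)
  have hae : ∀ᵐ x ∂μ, x ∈ Set.Ioc (0:ℝ) 1 := by
    have h1 : ∀ᵐ x ∂μ, x ∈ Set.Icc (0:ℝ) 1 := ae_restrict_mem measurableSet_Icc
    have h2 : ∀ᵐ x ∂μ, x ≠ 0 := by
      rw [ae_iff]
      have : {x : ℝ | ¬ x ≠ 0} = {0} := by ext y; simp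
      rw [this, hμ, Measure.restrict_apply (measurableSet_singleton 0)]
      exact measure_mono_null Set.inter_subset_left hzero
    filter_upwards [h1, h2] with x hx1 hx2
    exact ⟨lt_of_le_of_ne hx1.1 (Ne.symm hx2), hx1.2⟩
  have hInv : Integrable (fun x : ℝ => x⁻¹) μ := by
    constructor
    · exact measurable_inv.aestronglyMeasurable
    · rw [hasFiniteIntegral_iff_ofReal]
      · have he : ∫⁻ x, ENNReal.ofReal x⁻¹ ∂μ = ∫⁻ x, (ENNReal.ofReal x)⁻¹ ∂μ := by
          apply lintegral_congr_ae
          filter_upwards [hae] with x hx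
          rw [ENNReal.ofReal_inv_of_pos hx.1]
        rw [he]
        exact lt_top_iff_ne_top.2 hint
      · filter_upwards [hae] with x hx
        exact inv_nonneg.2 hx.1.le
  have hBound : Integrable (fun x : ℝ => max 1 lam * x⁻¹) μ := hInv.const_mul _
  have hDom := MeasureTheory.tendsto_integral_of_dominated_convergence
    (F := fun n => Fn lam n) (f := fun x => (1 - (1-x)^lam)/x^2)
    (bound := fun x => max 1 lam * x⁻¹) (μ := μ)
    (fun n => (Fn_continuous lam n).aestronglyMeasurable)
    hBound
    (fun n => by
      filter_upwards [hae] with x hx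
      rw [Real.norm_eq_abs, abs_of_nonneg (Fn_nonneg hlam n hx.1.le hx.2)]
      exact Fn_le hlam n hx.1 hx.2)
    (by
      filter_upwards [hae] with x hx
      exact pointwise hpos hx.1 hx.2)
  exact Tendsto.congr (fun n => (step1 Λ lam n).symm) hDom
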